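/- Let Γ be an abelian group, (G=(V,E),ψ) a Γ-gain graph, and μ: 2^Γ → ℝ₊ a symmetric polymatroidal function with μ({γ}) ≤ 1 for every γ ∈ Γ. Then the function ℓ_μ defined on subsets F of E by ℓ_μ(F) = |V(F)| − c(F) + μ(⟨⟨F⟩⟩), where ⟨⟨F⟩⟩ is the subgroup generated by the gains of all closed walks in F (over all base vertices), is monotone and submodular. -/

import Mathlib

/-- A directed multigraph: edges with a source and target map. -/
structure GG (V E : Type*) where
  src : E → V
  tgt : E → V

namespace GG

variable {V E : Type*}

/-- The initial vertex of a step (an edge together with a direction). -/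
def stepHead (G : GG V E) (s : E × Bool) : V := if s.2 then G.src s.1 else G.tgt s.1

/-- The final vertex of a step. -/
def stepLast (G : GG V E) (s : E × Bool) : V := if s.2 then G.tgt s.1 else G.src s.1

/-- Walks from `u` to `w` using only edges of `X`. -/
inductive IsWalkFrom (G : GG V E) (X : Set E) : V → V → List (E × Bool) → Prop
  | nil (v : V) : IsWalkFrom G X v v []
  | cons {u w : V} {s : E × Bool} {l : List (E × Bool)} (he : s.1 ∈ X)
      (h1 : G.stepHead s = u) (hl : IsWalkFrom G X (G.stepLast s) w l) :
      IsWalkFrom G X u w (s :: l)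

variable {Γ : Type*} [Group Γ]

/-- The gain of a walk: the product of the edge gains, inverted on backward edges. -/
def gainOf (ψ : E → Γ) : List (E × Bool) → Γ
  | [] => 1
  | s :: l => (if s.2 then ψ s.1 else (ψ s.1)⁻¹) * gainOf ψ l

/-- `⟨X⟩_{ψ,v}`: the subgroup generated by gains of closed walks at `v` using edges of `X`. -/
def walkGroup (G : GG V E) (ψ : E → Γ) (X : Set E) (v : V) : Subgroup Γ :=
  Subgroup.closure {g : Γ | ∃ l, G.IsWalkFrom X v v l ∧ gainOf ψ l = g}

open Classical in
/-- The switching of the gain function `ψ` at vertex `v` with `γ`. -/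
noncomputable def switch (G : GG V E) (ψ : E → Γ) (v : V) (γ : Γ) : E → Γ :=
  fun e => (if G.src e = v then γ else 1) * ψ e * (if G.tgt e = v then γ⁻¹ else 1)

/-- Two gain functions are equivalent if one is obtained from the other by a
finite sequence of switchings. -/
def Equivalent (G : GG V E) (ψ ψ' : E → Γ) : Prop :=
  Relation.ReflTransGen (fun a b => ∃ v γ, b = G.switch a v γ) ψ ψ'

/-- `V(X)`: the set of endvertices of edges of `X`. -/
def VSet (G : GG V E) (X : Set E) : Set V := {v | ∃ e ∈ X, G.src e = v ∨ G.tgt e = v}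

/-- `⟨⟨F⟩⟩`: the subgroup generated by the gains of all closed walks using edges of `F`
(over all base vertices). -/
def allWalkGroup (G : GG V E) (ψ : E → Γ) (F : Set E) : Subgroup Γ :=
  Subgroup.closure {g : Γ | ∃ (v : V) (l : List (E × Bool)),
    G.IsWalkFrom F v v l ∧ gainOf ψ l = g}

variable [Fintype V] [Fintype E] [DecidableEq V] [DecidableEq E]

/-- The finset of endvertices of the edges of `F`. -/
def vertexFinset (G : GG V E) (F : Finset E) : Finset V :=
  F.image G.src ∪ F.image G.tgt

/-- Two edges of `F` lie in the same connected component of `F`. -/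
def compRel (G : GG V E) (F : Finset E) (e f : {x // x ∈ F}) : Prop :=
  ∃ l, G.IsWalkFrom ↑F (G.src e.1) (G.src f.1) l

/-- `c(F)`: the number of connected components of the edge set `F`. -/
noncomputable def numComp (G : GG V E) (F : Finset E) : ℕ :=
  Nat.card (Quot (G.compRel F))

/-- `ℓ_μ(F) = |V(F)| − c(F) + μ(⟨⟨F⟩⟩)`. -/
noncomputable def ellMu (G : GG V E) (ψ : E → Γ) (μ : Set Γ → ℝ) (F : Finset E) : ℝ :=
  ((G.vertexFinset F).card : ℝ) - (G.numComp F : ℝ) + μ ↑(G.allWalkGroup ψ ↑F)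

end GG

/-- `μ` is a symmetric polymatroidal function over the group `Γ`. -/
def SymPolymatroidal {Γ : Type*} [Group Γ] (μ : Set Γ → ℝ) : Prop :=
  μ ∅ = 0 ∧ (∀ X : Set Γ, 0 ≤ μ X) ∧ (∀ X Y : Set Γ, X ⊆ Y → μ X ≤ μ Y) ∧
  (∀ X Y : Set Γ, μ (X ∪ Y) + μ (X ∩ Y) ≤ μ X + μ Y) ∧
  (∀ X : Set Γ, X.Nonempty → μ ↑(Subgroup.closure X) = μ X) ∧
  (∀ (X : Set Γ) (γ : Γ), X.Nonempty → μ ((fun x => γ * x * γ⁻¹) '' X) = μ X)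

section Aux
namespace GG
variable {V E : Type*} (G : GG V E) {X Y : Set E}

theorem walk_append {u v w : V} {l l' : List (E × Bool)}
    (h : G.IsWalkFrom X u v l) (h' : G.IsWalkFrom X v w l') :
    G.IsWalkFrom X u w (l ++ l') := by
  induction h with
  | nil => exact h'
  | cons he h1 hl ih => exact .cons he h1 (ih h')

theorem stepHead_flip (s : E × Bool) : G.stepHead (s.1, !s.2) = G.stepLast s := by
  cases s with | mk e b => cases b <;> simp [stepHead, stepLast]

theorem stepLast_flip (s : E × Bool) : G.stepLast (s.1, !s.2) = G.stepHead s := by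
  cases s with | mk e b => cases b <;> simp [stepHead, stepLast]

/-- reversal of a walk -/
def revW (l : List (E × Bool)) : List (E × Bool) :=
  (l.reverse).map (fun s => (s.1, !s.2))

theorem walk_reverse {u v : V} {l : List (E × Bool)}
    (h : G.IsWalkFrom X u v l) : G.IsWalkFrom X v u (revW l) := by
  induction h with
  | nil v => exact .nil v
  | @cons u w s l he h1 hl ih =>
      have hstep : G.IsWalkFrom X (G.stepLast s) u [(s.1, !s.2)] := by
        refine .cons he (G.stepHead_flip s) ?_
        rw [G.stepLast_flip s, h1]; exact .nil u
      have := G.walk_append ih hstep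
      simpa [revW] using this

theorem walk_mono (hXY : X ⊆ Y) {u v : V} {l : List (E × Bool)}
    (h : G.IsWalkFrom X u v l) : G.IsWalkFrom Y u v l := by
  induction h with
  | nil v => exact .nil v
  | cons he h1 hl ih => exact .cons (hXY he) h1 ih

theorem walk_edges_mem {u v : V} {l : List (E × Bool)}
    (h : G.IsWalkFrom X u v l) : ∀ s ∈ l, s.1 ∈ X := by
  induction h with
  | nil v => simp
  | cons he h1 hl ih =>
      intro s hs
      rcases List.mem_cons.1 hs with rfl | hs
      · exact he
      · exact ih s hs

theorem walk_of_forall_mem {u v : V} {l : List (E × Bool)}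
    (h : G.IsWalkFrom X u v l) (hY : ∀ s ∈ l, s.1 ∈ Y) : G.IsWalkFrom Y u v l := by
  induction h with
  | nil v => exact .nil v
  | cons he h1 hl ih =>
      exact .cons (hY _ List.mem_cons_self) h1 (ih fun s hs => hY s (List.mem_cons_of_mem _ hs))

variable {Γ : Type*} [Group Γ] (ψ : E → Γ)

theorem gain_append (l l' : List (E × Bool)) :
    gainOf ψ (l ++ l') = gainOf ψ l * gainOf ψ l' := by
  induction l with
  | nil => simp [gainOf]
  | cons s l ih => simp [gainOf, ih, mul_assoc]

theorem gain_revW (l : List (E × Bool)) :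
    gainOf ψ (revW l) = (gainOf ψ l)⁻¹ := by
  induction l with
  | nil => simp [gainOf, revW]
  | cons s l ih =>
      have : revW (s :: l) = revW l ++ [(s.1, !s.2)] := by simp [revW]
      rw [this, gain_append, ih]
      cases hb : s.2 <;> simp [gainOf, hb, mul_comm]

theorem head_mem_VSet {u v : V} {s : E × Bool} {l : List (E × Bool)}
    (h : G.IsWalkFrom X u v (s :: l)) : u ∈ G.VSet X := by
  cases h with
  | cons he h1 hl =>
      refine ⟨s.1, he, ?_⟩
      cases hb : s.2
      · right; simpa [stepHead, hb] using h1
      · left; simpa [stepHead, hb] using h1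

theorem last_mem_VSet {u v : V} {l : List (E × Bool)}
    (h : G.IsWalkFrom X u v l) (hl : l ≠ []) : v ∈ G.VSet X := by
  have h' := G.walk_reverse h
  cases hrev : revW l with
  | nil => exact absurd (by simpa [revW] using hrev) hl
  | cons s t => rw [hrev] at h'; exact G.head_mem_VSet h'

end GG
end Aux

section Aux2
namespace GG
variable {V E : Type*} (G : GG V E) {X Y : Set E}

/-- Connectivity of two vertices within an edge set. -/
def Conn (X : Set E) (u v : V) : Prop := ∃ l, G.IsWalkFrom X u v l

theorem conn_refl (u : V) : G.Conn X u u := ⟨[], .nil u⟩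

theorem conn_symm {u v : V} (h : G.Conn X u v) : G.Conn X v u := by
  obtain ⟨l, hl⟩ := h; exact ⟨_, G.walk_reverse hl⟩

theorem conn_trans {u v w : V} (h : G.Conn X u v) (h' : G.Conn X v w) : G.Conn X u w := by
  obtain ⟨l, hl⟩ := h; obtain ⟨l', hl'⟩ := h'; exact ⟨_, G.walk_append hl hl'⟩

theorem conn_mono (hXY : X ⊆ Y) {u v : V} (h : G.Conn X u v) : G.Conn Y u v := by
  obtain ⟨l, hl⟩ := h; exact ⟨_, G.walk_mono hXY hl⟩

/-- A single step as a walk. -/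
theorem step_walk {e : E} (he : e ∈ X) (b : Bool) :
    G.IsWalkFrom X (G.stepHead (e, b)) (G.stepLast (e, b)) [(e, b)] :=
  .cons he rfl (.nil _)

theorem conn_src_tgt {e : E} (he : e ∈ X) : G.Conn X (G.src e) (G.tgt e) :=
  ⟨[(e, true)], by simpa [stepHead, stepLast] using G.step_walk he true⟩

/-- Splitting a walk at the first occurrence of the edge `e`. -/
theorem walk_split_first (e : E) {u v : V} {W : List (E × Bool)}
    (h : G.IsWalkFrom X u v W) :
    (∀ s ∈ W, s.1 ≠ e) ∨
    ∃ P b R, W = P ++ (e, b) :: R ∧ G.IsWalkFrom X u (G.stepHead (e, b)) P ∧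
      (∀ s ∈ P, s.1 ≠ e) ∧ G.IsWalkFrom X (G.stepLast (e, b)) v R := by
  induction h with
  | nil v => left; simp
  | @cons u w s l he h1 hl ih =>
      by_cases hse : s.1 = e
      · right
        refine ⟨[], s.2, l, ?_, ?_, by simp, ?_⟩
        · simp [← hse]
        · have : (e, s.2) = s := by rw [← hse]
          rw [this, h1]; exact .nil u
        · have : (e, s.2) = s := by rw [← hse]
          rw [this]; exact hl
      · rcases ih with h0 | ⟨P, b, R, hW, hP, hPe, hR⟩
        · left
          intro t ht
          rcases List.mem_cons.1 ht with rfl | ht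
          · exact hse
          · exact h0 t ht
        · right
          refine ⟨s :: P, b, R, by rw [hW]; rfl, .cons he h1 hP, ?_, hR⟩
          intro t ht
          rcases List.mem_cons.1 ht with rfl | ht
          · exact hse
          · exact hPe t ht

/-- Where a walk in `insert e X` can go, relative to connectivity in `X`. -/
theorem walk_reach {e : E} {u v : V} {W : List (E × Bool)}
    (h : G.IsWalkFrom (insert e X) u v W) :
    G.Conn X u v ∨ ((G.Conn X u (G.src e) ∨ G.Conn X u (G.tgt e)) ∧
      (G.Conn X v (G.src e) ∨ G.Conn X v (G.tgt e))) := by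
  induction h with
  | nil v => left; exact G.conn_refl v
  | @cons u w s l he h1 hl ih =>
      by_cases hse : s.1 = e
      · right
        have hu : G.Conn X u (G.src e) ∨ G.Conn X u (G.tgt e) := by
          cases hb : s.2
          · right
            have : u = G.tgt e := by rw [← h1]; simp [stepHead, hb, hse]
            rw [this]; exact G.conn_refl _
          · left
            have : u = G.src e := by rw [← h1]; simp [stepHead, hb, hse]
            rw [this]; exact G.conn_refl _
        refine ⟨hu, ?_⟩
        have hlast : G.stepLast s = G.src e ∨ G.stepLast s = G.tgt e := by
          cases hb : s.2
          · left; simp [stepLast, hb, hse]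
          · right; simp [stepLast, hb, hse]
        rcases ih with hconn | ⟨_, hv⟩
        · rcases hlast with h' | h'
          · left; rw [← h']; exact G.conn_symm hconn
          · right; rw [← h']; exact G.conn_symm hconn
        · exact hv
      · have hsX : s.1 ∈ X := by
          rcases he with h' | h'
          · exact absurd h' hse
          · exact h'
        have hstep : G.Conn X u (G.stepLast s) := by
          rw [← h1]; exact ⟨_, G.step_walk hsX s.2⟩
        rcases ih with hconn | ⟨hu, hv⟩
        · left; exact G.conn_trans hstep hconn
        · right
          refine ⟨?_, hv⟩
          rcases hu with h' | h'
          · exact Or.inl (G.conn_trans hstep h')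
          · exact Or.inr (G.conn_trans hstep h')

end GG
end Aux2

section Aux3

theorem auxalg {Γ : Type*} [CommGroup Γ] (p q r a : Γ) :
    p * (a * (q * (a⁻¹ * r))) = (p * r) * q := by
  rw [mul_comm q (a⁻¹ * r), ← mul_assoc a, ← mul_assoc a, mul_inv_cancel, one_mul, mul_assoc]

theorem auxalg' {Γ : Type*} [CommGroup Γ] (p q r a : Γ) :
    p * (a⁻¹ * (q * (a * r))) = (p * r) * q := by
  have := auxalg p q r a⁻¹
  rwa [inv_inv] at this

namespace GG
variable {V E : Type*} (G : GG V E) {X : Set E} {Γ : Type*} [CommGroup Γ] (ψ : E → Γ)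

theorem gain_mem_allWalkGroup {v : V} {W : List (E × Bool)}
    (h : G.IsWalkFrom X v v W) : gainOf ψ W ∈ G.allWalkGroup ψ X :=
  Subgroup.subset_closure ⟨v, W, h, rfl⟩

theorem gain_div_mem {u w : V} {l₁ l₂ : List (E × Bool)}
    (h₁ : G.IsWalkFrom X u w l₁) (h₂ : G.IsWalkFrom X u w l₂) :
    gainOf ψ l₁ * (gainOf ψ l₂)⁻¹ ∈ G.allWalkGroup ψ X := by
  have := G.gain_mem_allWalkGroup ψ (G.walk_append h₁ (G.walk_reverse h₂))
  rwa [gain_append, gain_revW] at this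

theorem allWalkGroup_mono {X Y : Set E} (hXY : X ⊆ Y) :
    G.allWalkGroup ψ X ≤ G.allWalkGroup ψ Y := by
  apply Subgroup.closure_mono
  rintro g ⟨v, l, hl, rfl⟩
  exact ⟨v, l, G.walk_mono hXY hl, rfl⟩

/-- Removing all non-`e` edge hypotheses: a walk avoiding `e` in `insert e X` is a walk in `X`. -/
theorem walk_avoid {e : E} {u w : V} {l : List (E × Bool)}
    (h : G.IsWalkFrom (insert e X) u w l) (h0 : ∀ s ∈ l, s.1 ≠ e) :
    G.IsWalkFrom X u w l := by
  apply G.walk_of_forall_mem h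
  intro s hs
  rcases G.walk_edges_mem h s hs with h' | h'
  · exact absurd h' (h0 s hs)
  · exact h'

/-- In the bridge case, closed walks through `insert e X` have gains in the walk group of `X`. -/
theorem bridge_gain {e : E} (hnc : ¬ G.Conn X (G.src e) (G.tgt e)) :
    ∀ (n : ℕ) (W : List (E × Bool)) (v : V), W.length ≤ n →
      G.IsWalkFrom (insert e X) v v W → gainOf ψ W ∈ G.allWalkGroup ψ X := by
  intro n
  induction n with
  | zero =>
      intro W v hlen hW
      have : W = [] := List.length_eq_zero_iff.1 (Nat.le_zero.1 hlen)
      subst this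
      simp only [gainOf]
      exact one_mem _
  | succ n ih =>
      intro W v hlen hW
      rcases G.walk_split_first e hW with h0 | ⟨P, b, R, hWeq, hP, hPe, hR⟩
      · exact G.gain_mem_allWalkGroup ψ (G.walk_avoid hW h0)
      · have hPX : G.IsWalkFrom X v (G.stepHead (e, b)) P := G.walk_avoid hP hPe
        rcases G.walk_split_first e hR with h0 | ⟨P₁, b', R', hReq, hP₁, hP₁e, hR'⟩
        · exfalso
          have hRX : G.IsWalkFrom X (G.stepLast (e, b)) v R := G.walk_avoid hR h0
          have hconn : G.Conn X (G.stepLast (e, b)) (G.stepHead (e, b)) :=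
            G.conn_trans ⟨R, hRX⟩ ⟨P, hPX⟩
          cases b
          · exact hnc (by simpa [stepHead, stepLast] using hconn)
          · exact hnc (G.conn_symm (by simpa [stepHead, stepLast] using hconn))
        · have hP₁X : G.IsWalkFrom X (G.stepLast (e, b)) (G.stepHead (e, b')) P₁ :=
            G.walk_avoid hP₁ hP₁e
          have hbb : b' = !b := by
            cases b <;> cases b' <;> simp only [Bool.not_true, Bool.not_false] <;>
              first
                | rfl
                | · exfalso
                    apply hnc
                    revert hP₁X
                    simp only [stepHead, stepLast, if_pos, if_neg, Bool.false_eq_true,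
                      if_true, if_false]
                    intro hP₁X
                    first
                      | exact ⟨P₁, hP₁X⟩
                      | exact G.conn_symm ⟨P₁, hP₁X⟩
          subst hbb
          -- P₁ is a closed walk in X
          have hflip1 : G.stepHead (e, !b) = G.stepLast (e, b) := G.stepHead_flip (e, b)
          have hflip2 : G.stepLast (e, !b) = G.stepHead (e, b) := G.stepLast_flip (e, b)
          rw [hflip1] at hP₁X
          have hq : gainOf ψ P₁ ∈ G.allWalkGroup ψ X := G.gain_mem_allWalkGroup ψ hP₁X
          -- the shortened closed walk
          rw [hflip2] at hR'
          have hW' : G.IsWalkFrom (insert e X) v v (P ++ R') := G.walk_append hP hR'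
          have hlen' : (P ++ R').length ≤ n := by
            subst hWeq hReq
            simp only [List.length_append, List.length_cons] at hlen ⊢
            omega
          have hmem' := ih (P ++ R') v hlen' hW'
          -- gain identity
          have hgain : gainOf ψ W = gainOf ψ (P ++ R') * gainOf ψ P₁ := by
            subst hWeq hReq
            simp only [gain_append, gainOf]
            cases b <;> simp only [Bool.not_true, Bool.not_false, if_true, if_false]
            · exact auxalg' _ _ _ _
            · exact auxalg _ _ _ _
          rw [hgain]
          exact mul_mem hmem' hq

end GG
end Aux3

section Aux4
namespace GG
variable {V E : Type*} (G : GG V E) {X : Set E} {Γ : Type*} [CommGroup Γ] (ψ : E → Γ)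

theorem auxrep1 {Γ : Type*} [CommGroup Γ] (x g₀ γ a : Γ) (k : ℤ) (h : γ * g₀ = a) :
    a * (x * γ ^ k) = (g₀ * x) * γ ^ (k + 1) := by
  rw [← h, zpow_add_one]
  simp [mul_assoc, mul_comm, mul_left_comm]

theorem auxrep2 {Γ : Type*} [CommGroup Γ] (x g₀ γ a : Γ) (k : ℤ) (h : γ * g₀ = a) :
    a⁻¹ * (x * γ ^ k) = (g₀⁻¹ * x) * γ ^ (k - 1) := by
  have E := auxrep1 (g₀⁻¹ * x) g₀ γ a (k - 1) h
  rw [mul_inv_cancel_left, sub_add_cancel] at E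
  rw [← E, inv_mul_cancel_left]

theorem walk_replace {e : E} {l₀ : List (E × Bool)}
    (hl₀ : G.IsWalkFrom X (G.src e) (G.tgt e) l₀) {u w : V} {W : List (E × Bool)}
    (h : G.IsWalkFrom (insert e X) u w W) :
    ∃ (W' : List (E × Bool)) (k : ℤ), G.IsWalkFrom X u w W' ∧
      gainOf ψ W = gainOf ψ W' * (ψ e * (gainOf ψ l₀)⁻¹) ^ k := by
  set γ := ψ e * (gainOf ψ l₀)⁻¹ with hγ
  have hγg : γ * gainOf ψ l₀ = ψ e := by rw [hγ, inv_mul_cancel_right]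
  have hγg' : γ * gainOf ψ l₀ = ψ e := hγg
  induction h with
  | nil v => exact ⟨[], 0, .nil v, by simp [gainOf]⟩
  | @cons u w s l he h1 hl ih =>
      obtain ⟨W'', k, hwalk, hg⟩ := ih
      by_cases hse : s.1 = e
      · cases hb : s.2
        · -- backward traversal of e
          have hu : u = G.tgt e := by rw [← h1]; simp [stepHead, hb, hse]
          have hlast : G.stepLast s = G.src e := by simp [stepLast, hb, hse]
          refine ⟨revW l₀ ++ W'', k - 1, ?_, ?_⟩
          · rw [hu]
            exact G.walk_append (G.walk_reverse hl₀) (by rwa [hlast] at hwalk)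
          · rw [gain_append, gain_revW]
            simp only [gainOf, hb, hse, if_neg Bool.false_ne_true]
            rw [hg]
            exact auxrep2 _ _ _ _ _ hγg
        · -- forward traversal of e
          have hu : u = G.src e := by rw [← h1]; simp [stepHead, hb, hse]
          have hlast : G.stepLast s = G.tgt e := by simp [stepLast, hb, hse]
          refine ⟨l₀ ++ W'', k + 1, ?_, ?_⟩
          · rw [hu]
            exact G.walk_append hl₀ (by rwa [hlast] at hwalk)
          · rw [gain_append]
            simp only [gainOf, hb, hse, if_true]
            rw [hg]
            exact auxrep1 _ _ _ _ _ hγg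
      · have hsX : s.1 ∈ X := by
          rcases he with h' | h'
          · exact absurd h' hse
          · exact h'
        refine ⟨s :: W'', k, .cons hsX h1 hwalk, ?_⟩
        simp only [gainOf]
        rw [hg, mul_assoc]

theorem allWalkGroup_insert_of_not_conn {e : E}
    (hnc : ¬ G.Conn X (G.src e) (G.tgt e)) :
    G.allWalkGroup ψ (insert e X) = G.allWalkGroup ψ X := by
  refine le_antisymm ?_ (G.allWalkGroup_mono ψ (Set.subset_insert e X))
  rw [allWalkGroup]
  apply Subgroup.closure_le _ |>.2
  rintro g ⟨v, W, hW, rfl⟩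
  exact G.bridge_gain ψ hnc W.length W v le_rfl hW

theorem gamma_mem {e : E} {l₀ : List (E × Bool)}
    (hl₀ : G.IsWalkFrom X (G.src e) (G.tgt e) l₀) :
    ψ e * (gainOf ψ l₀)⁻¹ ∈ G.allWalkGroup ψ (insert e X) := by
  have hwalk : G.IsWalkFrom (insert e X) (G.src e) (G.src e) ((e, true) :: revW l₀) := by
    refine .cons (Set.mem_insert e X) (by simp [stepHead]) ?_
    have : G.stepLast (e, true) = G.tgt e := by simp [stepLast]
    rw [this]
    exact G.walk_mono (Set.subset_insert e X) (G.walk_reverse hl₀)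
  have := G.gain_mem_allWalkGroup ψ hwalk
  simpa [gainOf, gain_revW] using this

theorem allWalkGroup_insert_of_conn {e : E} {l₀ : List (E × Bool)}
    (hl₀ : G.IsWalkFrom X (G.src e) (G.tgt e) l₀) :
    G.allWalkGroup ψ (insert e X) =
      Subgroup.closure ((G.allWalkGroup ψ X : Set Γ) ∪ {ψ e * (gainOf ψ l₀)⁻¹}) := by
  set γ := ψ e * (gainOf ψ l₀)⁻¹ with hγ
  refine le_antisymm ?_ ?_
  · rw [allWalkGroup]
    apply Subgroup.closure_le _ |>.2
    rintro g ⟨v, W, hW, rfl⟩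
    obtain ⟨W', k, hwalk, hg⟩ := G.walk_replace ψ hl₀ hW
    rw [hg]
    have h1 : gainOf ψ W' ∈ Subgroup.closure ((G.allWalkGroup ψ X : Set Γ) ∪ {γ}) :=
      Subgroup.subset_closure (Set.mem_union_left _ (G.gain_mem_allWalkGroup ψ hwalk))
    have h2 : γ ∈ Subgroup.closure ((G.allWalkGroup ψ X : Set Γ) ∪ {γ}) :=
      Subgroup.subset_closure (Set.mem_union_right _ rfl)
    exact mul_mem h1 (zpow_mem h2 k)
  · apply Subgroup.closure_le _ |>.2
    rintro g (hg | hg)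
    · exact G.allWalkGroup_mono ψ (Set.subset_insert e X) hg
    · rw [Set.mem_singleton_iff] at hg
      rw [hg]
      exact G.gamma_mem ψ hl₀

end GG
end Aux4

section Aux5
variable {Γ : Type*} [CommGroup Γ] {μ : Set Γ → ℝ}

theorem mu_closure_subgroup (hμ : SymPolymatroidal μ) (H : Subgroup Γ) (S : Set Γ) :
    μ ↑(Subgroup.closure ((H : Set Γ) ∪ S)) = μ ((H : Set Γ) ∪ S) :=
  hμ.2.2.2.2.1 _ ⟨1, Set.mem_union_left _ (one_mem H)⟩

theorem mu_mono_subgroup (hμ : SymPolymatroidal μ) {H H' : Subgroup Γ} (h : H ≤ H') :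
    μ ↑H ≤ μ ↑H' := hμ.2.2.1 _ _ h

theorem mu_key3 (hμ : SymPolymatroidal μ) (H : Subgroup Γ) (γ : Γ) :
    μ ↑H ≤ μ ↑(Subgroup.closure ((H : Set Γ) ∪ {γ})) := by
  apply hμ.2.2.1
  intro x hx
  exact Subgroup.subset_closure (Set.mem_union_left _ hx)

theorem mu_key2 (hμ : SymPolymatroidal μ) (hμ1 : ∀ γ : Γ, μ {γ} ≤ 1) (H : Subgroup Γ) (γ : Γ) :
    μ ↑(Subgroup.closure ((H : Set Γ) ∪ {γ})) ≤ μ ↑H + 1 := by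
  rw [mu_closure_subgroup hμ]
  have hsub := hμ.2.2.2.1 (H : Set Γ) {γ}
  have hpos := hμ.2.1 ((H : Set Γ) ∩ {γ})
  have := hμ1 γ
  linarith

theorem mu_key1 (hμ : SymPolymatroidal μ) {H H' : Subgroup Γ} (hle : H ≤ H') (γ : Γ) :
    μ ↑(Subgroup.closure ((H' : Set Γ) ∪ {γ})) + μ ↑H ≤
      μ ↑(Subgroup.closure ((H : Set Γ) ∪ {γ})) + μ ↑H' := by
  rw [mu_closure_subgroup hμ, mu_closure_subgroup hμ]
  have hsub := hμ.2.2.2.1 ((H : Set Γ) ∪ {γ}) (H' : Set Γ)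
  have hU : ((H : Set Γ) ∪ {γ}) ∪ (H' : Set Γ) = (H' : Set Γ) ∪ {γ} := by
    ext x
    constructor
    · rintro ((hx | hx) | hx)
      · exact Or.inl (hle hx)
      · exact Or.inr hx
      · exact Or.inl hx
    · rintro (hx | hx)
      · exact Or.inr hx
      · exact Or.inl (Or.inr hx)
  rw [hU] at hsub
  have hI : μ ↑H ≤ μ (((H : Set Γ) ∪ {γ}) ∩ (H' : Set Γ)) := by
    apply hμ.2.2.1
    intro x hx
    exact ⟨Or.inl hx, hle hx⟩
  linarith

end Aux5

section Aux6
set_option linter.unusedSectionVars false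
namespace GG
variable {V E : Type*} (G : GG V E) {X : Set E}

theorem walk_nil_eq {u v : V} (h : G.IsWalkFrom X u v []) : u = v := by
  cases h; rfl

theorem conn_ne_mem {u v : V} (h : G.Conn X u v) (huv : u ≠ v) : v ∈ G.VSet X := by
  obtain ⟨l, hl⟩ := h
  cases l with
  | nil => exact absurd (G.walk_nil_eq hl) huv
  | cons s t => exact G.last_mem_VSet hl (by simp)

theorem conn_ne_mem' {u v : V} (h : G.Conn X u v) (huv : u ≠ v) : u ∈ G.VSet X :=
  G.conn_ne_mem (G.conn_symm h) huv.symm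

theorem exists_edge_conn {v : V} (hv : v ∈ G.VSet X) :
    ∃ f, f ∈ X ∧ G.Conn X (G.src f) v := by
  obtain ⟨f, hf, hor⟩ := hv
  refine ⟨f, hf, ?_⟩
  rcases hor with h | h
  · rw [h]; exact G.conn_refl v
  · rw [← h]; exact G.conn_src_tgt hf

variable [Fintype V] [Fintype E] [DecidableEq V] [DecidableEq E]
variable {F : Finset E} {e : E}

theorem mem_vertexFinset {v : V} : v ∈ G.vertexFinset F ↔ v ∈ G.VSet (↑F : Set E) := by
  simp [vertexFinset, VSet, Finset.mem_union, Finset.mem_image]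
  constructor
  · rintro (⟨f, hf, h⟩ | ⟨f, hf, h⟩)
    · exact ⟨f, hf, Or.inl h⟩
    · exact ⟨f, hf, Or.inr h⟩
  · rintro ⟨f, hf, h | h⟩
    · exact Or.inl ⟨f, hf, h⟩
    · exact Or.inr ⟨f, hf, h⟩

theorem vertexFinset_insert :
    G.vertexFinset (insert e F) = insert (G.src e) (insert (G.tgt e) (G.vertexFinset F)) := by
  ext v
  simp only [vertexFinset, Finset.mem_union, Finset.mem_image, Finset.mem_insert]
  constructor
  · rintro (⟨f, hf, h⟩ | ⟨f, hf, h⟩) <;> rcases hf with rfl | hf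
    · exact Or.inl h.symm
    · exact Or.inr (Or.inr (Or.inl ⟨f, hf, h⟩))
    · exact Or.inr (Or.inl h.symm)
    · exact Or.inr (Or.inr (Or.inr ⟨f, hf, h⟩))
  · rintro (rfl | rfl | (⟨f, hf, h⟩ | ⟨f, hf, h⟩))
    · exact Or.inl ⟨e, Or.inl rfl, rfl⟩
    · exact Or.inr ⟨e, Or.inl rfl, rfl⟩
    · exact Or.inl ⟨f, Or.inr hf, h⟩
    · exact Or.inr ⟨f, Or.inr hf, h⟩

theorem compRel_equivalence (F : Finset E) : Equivalence (G.compRel F) := by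
  constructor
  · intro x; exact G.conn_refl _
  · intro x y h; exact G.conn_symm h
  · intro x y z h h'; exact G.conn_trans h h'

theorem mk_eq_mk {x y : {a // a ∈ F}} :
    Quot.mk (G.compRel F) x = Quot.mk (G.compRel F) y ↔ G.compRel F x y :=
  Quot.eq.trans (G.compRel_equivalence F).eqvGen_iff

/-- The natural map on components induced by inserting an edge. -/
def compMap (F : Finset E) (e : E) : Quot (G.compRel F) → Quot (G.compRel (insert e F)) :=
  Quot.lift (fun x => Quot.mk _ ⟨x.1, Finset.mem_insert_of_mem x.2⟩)
    (fun a b hab => Quot.sound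
      (G.conn_mono (by rw [Finset.coe_insert]; exact Set.subset_insert _ _) hab))

theorem compMap_mk (x : {a // a ∈ F}) :
    G.compMap F e (Quot.mk _ x) = Quot.mk _ ⟨x.1, Finset.mem_insert_of_mem x.2⟩ := rfl

/-- The two endpoints of `e` are connected to `src e` within `insert e F`. -/
theorem conn_insert_tgt_src : G.Conn ↑(insert e F) (G.tgt e) (G.src e) := by
  rw [Finset.coe_insert]
  exact G.conn_symm (G.conn_src_tgt (Set.mem_insert e ↑F))

theorem conn_vset_src {v : V} (hv : v ∈ G.VSet (↑F : Set E))
    (h : G.Conn ↑F v (G.src e) ∨ G.Conn ↑F v (G.tgt e)) :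
    ∃ f, f ∈ F ∧ G.Conn ↑(insert e F) (G.src f) (G.src e) := by
  obtain ⟨f, hf, hc⟩ := G.exists_edge_conn hv
  have hsub : (↑F : Set E) ⊆ ↑(insert e F) := by
    rw [Finset.coe_insert]; exact Set.subset_insert _ _
  refine ⟨f, hf, ?_⟩
  rcases h with h | h
  · exact G.conn_mono hsub (G.conn_trans hc h)
  · exact G.conn_trans (G.conn_mono hsub (G.conn_trans hc h)) G.conn_insert_tgt_src

/-- membership fact: an edge of `F` is connected (in `insert e F`) to `src e` provided
its class touches an endpoint of `e`. -/
theorem compMap_surjective (hv : G.src e ∈ G.VSet (↑F : Set E) ∨ G.tgt e ∈ G.VSet (↑F : Set E)) :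
    Function.Surjective (G.compMap F e) := by
  intro b
  refine Quot.inductionOn b ?_
  rintro ⟨f, hf⟩
  rcases Finset.mem_insert.1 hf with rfl | hfF
  · -- the class of `e` itself
    have : ∃ f₀, f₀ ∈ F ∧ G.Conn ↑(insert f F) (G.src f₀) (G.src f) := by
      rcases hv with hv | hv
      · exact G.conn_vset_src hv (Or.inl (G.conn_refl _))
      · exact G.conn_vset_src hv (Or.inr (G.conn_refl _))
    obtain ⟨f₀, hf₀, hc⟩ := this
    exact ⟨Quot.mk _ ⟨f₀, hf₀⟩, (G.mk_eq_mk).2 hc⟩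
  · exact ⟨Quot.mk _ ⟨f, hfF⟩, rfl⟩

theorem compMap_injective (hc : G.Conn ↑F (G.src e) (G.tgt e)) :
    Function.Injective (G.compMap F e) := by
  obtain ⟨l₀, hl₀⟩ := hc
  intro x y
  refine Quot.inductionOn x (fun a => Quot.inductionOn y (fun b h => ?_))
  rw [compMap_mk, compMap_mk, G.mk_eq_mk] at h
  obtain ⟨W, hW⟩ := h
  rw [Finset.coe_insert] at hW
  obtain ⟨W', k, hwalk, -⟩ := G.walk_replace (ψ := fun _ => (1 : Multiplicative ℤ)) hl₀ hW
  exact (G.mk_eq_mk).2 ⟨W', hwalk⟩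

end GG
end Aux6

section Aux7
set_option linter.unusedSectionVars false
namespace GG
variable {V E : Type*} (G : GG V E)
variable [Fintype V] [Fintype E] [DecidableEq V] [DecidableEq E]
variable {F : Finset E} {e : E}

theorem src_mem_VSet (x : {a // a ∈ F}) : G.src x.1 ∈ G.VSet (↑F : Set E) :=
  ⟨x.1, Finset.mem_coe.2 x.2, Or.inl rfl⟩

theorem not_conn_of_not_mem {u w : V} (hu : u ∈ G.VSet (↑F : Set E))
    (hw : w ∉ G.VSet (↑F : Set E)) : ¬ G.Conn ↑F u w := by
  intro h
  have huw : u ≠ w := fun h' => hw (h' ▸ hu)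
  exact hw (G.conn_ne_mem h huw)

/-- counting helper -/
theorem card_ne_add_one {α : Type*} [Finite α] (B : α) :
    Nat.card {x : α // x ≠ B} + 1 = Nat.card α := by
  classical
  have : Fintype α := Fintype.ofFinite α
  rw [Nat.card_eq_fintype_card, Nat.card_eq_fintype_card]
  have h1 : Fintype.card {x : α // x = B} = 1 := Fintype.card_subtype_eq B
  have h2 : Fintype.card {x : α // ¬ x = B} = Fintype.card α - Fintype.card {x : α // x = B} :=
    Fintype.card_subtype_compl _
  have h3 : 1 ≤ Fintype.card α := Fintype.card_pos_iff.2 ⟨B⟩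
  convert_to Fintype.card {x : α // ¬ x = B} + 1 = Fintype.card α
  omega

theorem card_option' {α : Type*} [Finite α] : Nat.card (Option α) = Nat.card α + 1 := by
  have : Fintype α := Fintype.ofFinite α
  simp [Nat.card_eq_fintype_card]

/-- Case A : endpoints connected, `e` touching the old vertex set. -/
theorem numComp_insert_conn_touch (hc : G.Conn ↑F (G.src e) (G.tgt e))
    (hv : G.src e ∈ G.VSet (↑F : Set E) ∨ G.tgt e ∈ G.VSet (↑F : Set E)) :
    G.numComp (insert e F) = G.numComp F :=
  (Nat.card_eq_of_bijective _ ⟨G.compMap_injective hc, G.compMap_surjective hv⟩).symm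

/-- Case B : endpoints connected, `src e` (hence everything) outside the old vertex set. -/
theorem numComp_insert_conn_new (hc : G.Conn ↑F (G.src e) (G.tgt e))
    (hs : G.src e ∉ G.VSet (↑F : Set E)) :
    G.numComp (insert e F) = G.numComp F + 1 := by
  obtain ⟨l₀, hl₀⟩ := hc
  classical
  set B0 : Quot (G.compRel (insert e F)) := Quot.mk _ ⟨e, Finset.mem_insert_self e F⟩ with hB0
  set f : Option (Quot (G.compRel F)) → Quot (G.compRel (insert e F)) :=
    fun o => o.elim B0 (G.compMap F e) with hf
  have hnotB : ∀ x : {a // a ∈ F}, G.compMap F e (Quot.mk _ x) ≠ B0 := by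
    intro x h
    rw [compMap_mk, hB0, G.mk_eq_mk] at h
    obtain ⟨W, hW⟩ := h
    rw [Finset.coe_insert] at hW
    obtain ⟨W', k, hwalk, -⟩ := G.walk_replace (ψ := fun _ => (1 : Multiplicative ℤ)) hl₀ hW
    exact G.not_conn_of_not_mem (G.src_mem_VSet x) hs ⟨W', hwalk⟩
  have hbij : Function.Bijective f := by
    constructor
    · rintro (_ | a) (_ | b) h
      · rfl
      · exfalso
        refine Quot.inductionOn b (fun x h => ?_) h.symm
        exact hnotB x h
      · exfalso
        refine Quot.inductionOn a (fun x h => ?_) h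
        exact hnotB x h
      · simp only [hf, Option.elim] at h
        exact congrArg some (G.compMap_injective ⟨l₀, hl₀⟩ h)
    · intro b
      refine Quot.inductionOn b ?_
      rintro ⟨g, hg⟩
      rcases Finset.mem_insert.1 hg with rfl | hgF
      · exact ⟨none, rfl⟩
      · exact ⟨some (Quot.mk _ ⟨g, hgF⟩), rfl⟩
  have := (Nat.card_eq_of_bijective f hbij).symm
  rw [card_option'] at this
  exact this

/-- Case E : endpoints not connected, both endpoints new. -/
theorem numComp_insert_not_conn_new (hnc : ¬ G.Conn ↑F (G.src e) (G.tgt e))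
    (hs : G.src e ∉ G.VSet (↑F : Set E)) (ht : G.tgt e ∉ G.VSet (↑F : Set E)) :
    G.numComp (insert e F) = G.numComp F + 1 := by
  classical
  set B0 : Quot (G.compRel (insert e F)) := Quot.mk _ ⟨e, Finset.mem_insert_self e F⟩ with hB0
  set f : Option (Quot (G.compRel F)) → Quot (G.compRel (insert e F)) :=
    fun o => o.elim B0 (G.compMap F e) with hf
  have hres : ∀ (x : {a // a ∈ F}) (v : V), G.Conn ↑(insert e F) (G.src x.1) v →
      G.Conn ↑F (G.src x.1) v := by
    intro x v h
    obtain ⟨W, hW⟩ := h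
    rw [Finset.coe_insert] at hW
    rcases G.walk_reach hW with h' | ⟨hside, -⟩
    · exact h'
    · exfalso
      rcases hside with h' | h'
      · exact G.not_conn_of_not_mem (G.src_mem_VSet x) hs h'
      · exact G.not_conn_of_not_mem (G.src_mem_VSet x) ht h'
  have hnotB : ∀ x : {a // a ∈ F}, G.compMap F e (Quot.mk _ x) ≠ B0 := by
    intro x h
    rw [compMap_mk, hB0, G.mk_eq_mk] at h
    have := hres x _ h
    exact G.not_conn_of_not_mem (G.src_mem_VSet x) hs this
  have hbij : Function.Bijective f := by
    constructor
    · rintro (_ | a) (_ | b) h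
      · rfl
      · exfalso
        refine Quot.inductionOn b (fun x h => ?_) h.symm
        exact hnotB x h
      · exfalso
        refine Quot.inductionOn a (fun x h => ?_) h
        exact hnotB x h
      · refine congrArg some ?_
        simp only [hf, Option.elim] at h
        revert h
        refine Quot.inductionOn a (fun x => Quot.inductionOn b (fun y h => ?_))
        rw [compMap_mk, compMap_mk, G.mk_eq_mk] at h
        exact (G.mk_eq_mk).2 (hres x _ h)
    · intro b
      refine Quot.inductionOn b ?_
      rintro ⟨g, hg⟩
      rcases Finset.mem_insert.1 hg with rfl | hgF
      · exact ⟨none, rfl⟩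
      · exact ⟨some (Quot.mk _ ⟨g, hgF⟩), rfl⟩
  have := (Nat.card_eq_of_bijective f hbij).symm
  rw [card_option'] at this
  exact this

/-- Case D : endpoints not connected, `a` an endpoint in the old vertex set,
`b` the other endpoint, outside. -/
theorem numComp_insert_not_conn_one {a b : V}
    (hnc : ¬ G.Conn ↑F (G.src e) (G.tgt e))
    (hab : (a = G.src e ∧ b = G.tgt e) ∨ (a = G.tgt e ∧ b = G.src e))
    (ha : a ∈ G.VSet (↑F : Set E)) (hb : b ∉ G.VSet (↑F : Set E)) :
    G.numComp (insert e F) = G.numComp F := by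
  have hres : ∀ (x y : {a // a ∈ F}), G.Conn ↑(insert e F) (G.src x.1) (G.src y.1) →
      G.Conn ↑F (G.src x.1) (G.src y.1) := by
    intro x y h
    obtain ⟨W, hW⟩ := h
    rw [Finset.coe_insert] at hW
    rcases G.walk_reach hW with h' | ⟨hx, hy⟩
    · exact h'
    · have hxa : G.Conn ↑F (G.src x.1) a := by
        rcases hab with ⟨rfl, rfl⟩ | ⟨rfl, rfl⟩
        · rcases hx with h' | h'
          · exact h'
          · exact absurd h' (G.not_conn_of_not_mem (G.src_mem_VSet x) hb)
        · rcases hx with h' | h'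
          · exact absurd h' (G.not_conn_of_not_mem (G.src_mem_VSet x) hb)
          · exact h'
      have hya : G.Conn ↑F (G.src y.1) a := by
        rcases hab with ⟨rfl, rfl⟩ | ⟨rfl, rfl⟩
        · rcases hy with h' | h'
          · exact h'
          · exact absurd h' (G.not_conn_of_not_mem (G.src_mem_VSet y) hb)
        · rcases hy with h' | h'
          · exact absurd h' (G.not_conn_of_not_mem (G.src_mem_VSet y) hb)
          · exact h'
      exact G.conn_trans hxa (G.conn_symm hya)
  have hinj : Function.Injective (G.compMap F e) := by
    intro x y
    refine Quot.inductionOn x (fun x' => Quot.inductionOn y (fun y' h => ?_))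
    rw [compMap_mk, compMap_mk, G.mk_eq_mk] at h
    exact (G.mk_eq_mk).2 (hres x' y' h)
  have hsurj : Function.Surjective (G.compMap F e) := by
    apply G.compMap_surjective
    rcases hab with ⟨rfl, rfl⟩ | ⟨rfl, rfl⟩
    · exact Or.inl ha
    · exact Or.inr ha
  exact (Nat.card_eq_of_bijective _ ⟨hinj, hsurj⟩).symm

/-- Case C : endpoints not connected, both in the old vertex set. -/
theorem numComp_insert_not_conn_both (hnc : ¬ G.Conn ↑F (G.src e) (G.tgt e))
    (hs : G.src e ∈ G.VSet (↑F : Set E)) (ht : G.tgt e ∈ G.VSet (↑F : Set E)) :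
    G.numComp F = G.numComp (insert e F) + 1 := by
  classical
  obtain ⟨f₀, hf₀, hc₀⟩ := G.exists_edge_conn hs
  obtain ⟨f₁, hf₁, hc₁⟩ := G.exists_edge_conn ht
  set A0 : Quot (G.compRel F) := Quot.mk _ ⟨f₀, hf₀⟩ with hA0
  set B : Quot (G.compRel F) := Quot.mk _ ⟨f₁, hf₁⟩ with hB
  have hAB : A0 ≠ B := by
    intro h
    rw [hA0, hB, G.mk_eq_mk] at h
    exact hnc (G.conn_trans (G.conn_symm hc₀) (G.conn_trans h hc₁))
  have hsub : (↑F : Set E) ⊆ ↑(insert e F) := by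
    rw [Finset.coe_insert]; exact Set.subset_insert _ _
  have hestep : G.Conn ↑(insert e F) (G.src e) (G.tgt e) := by
    rw [Finset.coe_insert]
    exact G.conn_src_tgt (Set.mem_insert e ↑F)
  have hA0B' : G.compMap F e A0 = G.compMap F e B := by
    rw [hA0, hB, compMap_mk, compMap_mk, G.mk_eq_mk]
    refine G.conn_trans (G.conn_mono hsub hc₀) (G.conn_trans hestep ?_)
    exact G.conn_symm (G.conn_mono hsub hc₁)
  -- the restriction of compMap to the complement of B is a bijection
  set f : {x : Quot (G.compRel F) // x ≠ B} → Quot (G.compRel (insert e F)) :=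
    fun x => G.compMap F e x.1 with hfdef
  have key : ∀ (x y : {a // a ∈ F}), Quot.mk (G.compRel F) x ≠ B → Quot.mk (G.compRel F) y ≠ B →
      G.compMap F e (Quot.mk _ x) = G.compMap F e (Quot.mk _ y) →
      Quot.mk (G.compRel F) x = Quot.mk (G.compRel F) y := by
    intro x y hx hy h
    rw [compMap_mk, compMap_mk, G.mk_eq_mk] at h
    obtain ⟨W, hW⟩ := h
    rw [Finset.coe_insert] at hW
    rcases G.walk_reach hW with h' | ⟨hx', hy'⟩
    · exact (G.mk_eq_mk).2 h'
    · have hxs : G.Conn ↑F (G.src x.1) (G.src e) := by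
        rcases hx' with h' | h'
        · exact h'
        · exact absurd ((G.mk_eq_mk).2 (G.conn_trans h' (G.conn_symm hc₁))) hx
      have hys : G.Conn ↑F (G.src y.1) (G.src e) := by
        rcases hy' with h' | h'
        · exact h'
        · exact absurd ((G.mk_eq_mk).2 (G.conn_trans h' (G.conn_symm hc₁))) hy
      exact (G.mk_eq_mk).2 (G.conn_trans hxs (G.conn_symm hys))
  have hbij : Function.Bijective f := by
    constructor
    · rintro ⟨x1, hx1⟩ ⟨y1, hy1⟩ h
      apply Subtype.ext
      simp only [hfdef] at h
      revert hx1 hy1 h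
      refine Quot.inductionOn x1 (fun x => Quot.inductionOn y1 (fun y hx1 hy1 h => ?_))
      exact key x y hx1 hy1 h
    · intro b
      refine Quot.inductionOn b ?_
      rintro ⟨g, hg⟩
      rcases Finset.mem_insert.1 hg with rfl | hgF
      · refine ⟨⟨A0, hAB⟩, ?_⟩
        simp only [hfdef, hA0, compMap_mk]
        rw [G.mk_eq_mk]
        exact G.conn_mono hsub hc₀
      · by_cases hBg : Quot.mk (G.compRel F) ⟨g, hgF⟩ = B
        · refine ⟨⟨A0, hAB⟩, ?_⟩
          simp only [hfdef]
          rw [hA0B', ← hBg]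
          rfl
        · exact ⟨⟨Quot.mk _ ⟨g, hgF⟩, hBg⟩, rfl⟩
  have h1 : Nat.card {x : Quot (G.compRel F) // x ≠ B} = G.numComp (insert e F) :=
    Nat.card_eq_of_bijective f hbij
  have h2 := card_ne_add_one (B := B)
  rw [h1] at h2
  rw [numComp]
  exact h2.symm

end GG
end Aux7

section Aux8
set_option linter.unusedSectionVars false
namespace GG
variable {V E : Type*} (G : GG V E)
variable [Fintype V] [Fintype E] [DecidableEq V] [DecidableEq E]
variable {F : Finset E} {e : E}

/-- The graphic rank `|V(F)| - c(F)` as a real number. -/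
noncomputable def rkOf (F : Finset E) : ℝ :=
  ((G.vertexFinset F).card : ℝ) - (G.numComp F : ℝ)

theorem rk_insert_conn (hc : G.Conn ↑F (G.src e) (G.tgt e)) :
    G.rkOf (insert e F) = G.rkOf F := by
  by_cases hs : G.src e ∈ G.VSet (↑F : Set E)
  · have hts : G.tgt e ∈ G.VSet (↑F : Set E) := by
      by_cases hne : G.src e = G.tgt e
      · rwa [← hne]
      · exact G.conn_ne_mem hc hne
    have hV : G.vertexFinset (insert e F) = G.vertexFinset F := by
      rw [G.vertexFinset_insert, Finset.insert_eq_self.2 (G.mem_vertexFinset.2 hts),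
        Finset.insert_eq_self.2 (G.mem_vertexFinset.2 hs)]
    have hC := G.numComp_insert_conn_touch hc (Or.inl hs)
    rw [rkOf, rkOf, hV, hC]
  · have heq : G.src e = G.tgt e := by
      by_contra hne
      exact hs (G.conn_ne_mem' hc hne)
    have hV : (G.vertexFinset (insert e F)).card = (G.vertexFinset F).card + 1 := by
      rw [G.vertexFinset_insert, ← heq, Finset.insert_idem,
        Finset.card_insert_of_notMem (fun h => hs (G.mem_vertexFinset.1 h))]
    have hC := G.numComp_insert_conn_new hc hs
    rw [rkOf, rkOf, hV, hC]
    push_cast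
    ring

theorem rk_insert_not_conn (hnc : ¬ G.Conn ↑F (G.src e) (G.tgt e)) :
    G.rkOf (insert e F) = G.rkOf F + 1 := by
  have hne : G.src e ≠ G.tgt e := by
    intro h
    exact hnc (by rw [h]; exact G.conn_refl _)
  by_cases hs : G.src e ∈ G.VSet (↑F : Set E) <;>
    by_cases ht : G.tgt e ∈ G.VSet (↑F : Set E)
  · -- both old
    have hV : G.vertexFinset (insert e F) = G.vertexFinset F := by
      rw [G.vertexFinset_insert, Finset.insert_eq_self.2 (G.mem_vertexFinset.2 ht),
        Finset.insert_eq_self.2 (G.mem_vertexFinset.2 hs)]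
    have hC := G.numComp_insert_not_conn_both hnc hs ht
    rw [rkOf, rkOf, hV, hC]
    push_cast
    ring
  · -- src old, tgt new
    have hV : (G.vertexFinset (insert e F)).card = (G.vertexFinset F).card + 1 := by
      rw [G.vertexFinset_insert,
        Finset.insert_eq_self.2 (Finset.mem_insert_of_mem (G.mem_vertexFinset.2 hs)),
        Finset.card_insert_of_notMem (fun h => ht (G.mem_vertexFinset.1 h))]
    have hC := G.numComp_insert_not_conn_one hnc (Or.inl ⟨rfl, rfl⟩) hs ht
    rw [rkOf, rkOf, hV, hC]
    push_cast
    ring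
  · -- tgt old, src new
    have hV : (G.vertexFinset (insert e F)).card = (G.vertexFinset F).card + 1 := by
      rw [G.vertexFinset_insert, Finset.insert_eq_self.2 (G.mem_vertexFinset.2 ht),
        Finset.card_insert_of_notMem (fun h => hs (G.mem_vertexFinset.1 h))]
    have hC := G.numComp_insert_not_conn_one hnc (Or.inr ⟨rfl, rfl⟩) ht hs
    rw [rkOf, rkOf, hV, hC]
    push_cast
    ring
  · -- both new
    have hV : (G.vertexFinset (insert e F)).card = (G.vertexFinset F).card + 2 := by
      rw [G.vertexFinset_insert,
        Finset.card_insert_of_notMem, Finset.card_insert_of_notMem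
          (fun h => ht (G.mem_vertexFinset.1 h))]
      intro h
      rcases Finset.mem_insert.1 h with h | h
      · exact hne h
      · exact hs (G.mem_vertexFinset.1 h)
    have hC := G.numComp_insert_not_conn_new hnc hs ht
    rw [rkOf, rkOf, hV, hC]
    push_cast
    ring

end GG
end Aux8

section Aux9
set_option linter.unusedSectionVars false
namespace GG
variable {V E : Type*} (G : GG V E) {Γ : Type*} [CommGroup Γ] (ψ : E → Γ) {μ : Set Γ → ℝ}
variable [Fintype V] [Fintype E] [DecidableEq V] [DecidableEq E]
variable {F F' : Finset E} {e : E}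

theorem ellMu_eq (μ : Set Γ → ℝ) (F : Finset E) :
    G.ellMu ψ μ F = G.rkOf F + μ ↑(G.allWalkGroup ψ ↑F) := by
  rw [ellMu, rkOf]

theorem ellMu_insert_mono (hμ : SymPolymatroidal μ) :
    G.ellMu ψ μ F ≤ G.ellMu ψ μ (insert e F) := by
  have hgle : G.allWalkGroup ψ ↑F ≤ G.allWalkGroup ψ ↑(insert e F) :=
    G.allWalkGroup_mono ψ (Finset.coe_subset.2 (Finset.subset_insert e F))
  have hmu := mu_mono_subgroup hμ hgle
  rw [ellMu_eq, ellMu_eq]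
  by_cases hc : G.Conn ↑F (G.src e) (G.tgt e)
  · rw [G.rk_insert_conn hc]; linarith
  · rw [G.rk_insert_not_conn hc]; linarith

theorem ellMu_DR (hμ : SymPolymatroidal μ) (hμ1 : ∀ γ : Γ, μ {γ} ≤ 1) (hFF' : F ⊆ F') :
    G.ellMu ψ μ (insert e F') - G.ellMu ψ μ F' ≤ G.ellMu ψ μ (insert e F) - G.ellMu ψ μ F := by
  have hle : G.allWalkGroup ψ ↑F ≤ G.allWalkGroup ψ ↑F' :=
    G.allWalkGroup_mono ψ (Finset.coe_subset.2 hFF')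
  rw [ellMu_eq, ellMu_eq, ellMu_eq, ellMu_eq]
  by_cases hc : G.Conn ↑F (G.src e) (G.tgt e)
  · obtain ⟨l₀, hl₀⟩ := hc
    have hl₀' : G.IsWalkFrom ↑F' (G.src e) (G.tgt e) l₀ :=
      G.walk_mono (Finset.coe_subset.2 hFF') hl₀
    have hgF : G.allWalkGroup ψ ↑(insert e F) =
        Subgroup.closure ((G.allWalkGroup ψ ↑F : Set Γ) ∪ {ψ e * (gainOf ψ l₀)⁻¹}) := by
      rw [Finset.coe_insert]
      exact G.allWalkGroup_insert_of_conn ψ hl₀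
    have hgF' : G.allWalkGroup ψ ↑(insert e F') =
        Subgroup.closure ((G.allWalkGroup ψ ↑F' : Set Γ) ∪ {ψ e * (gainOf ψ l₀)⁻¹}) := by
      rw [Finset.coe_insert]
      exact G.allWalkGroup_insert_of_conn ψ hl₀'
    have hkey := mu_key1 hμ hle (ψ e * (gainOf ψ l₀)⁻¹)
    rw [G.rk_insert_conn ⟨l₀, hl₀⟩, G.rk_insert_conn ⟨l₀, hl₀'⟩, hgF, hgF']
    linarith
  · by_cases hc' : G.Conn ↑F' (G.src e) (G.tgt e)
    · obtain ⟨l₀', hl₀'⟩ := hc'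
      have hgF : G.allWalkGroup ψ ↑(insert e F) = G.allWalkGroup ψ ↑F := by
        rw [Finset.coe_insert]
        exact G.allWalkGroup_insert_of_not_conn ψ hc
      have hgF' : G.allWalkGroup ψ ↑(insert e F') =
          Subgroup.closure ((G.allWalkGroup ψ ↑F' : Set Γ) ∪ {ψ e * (gainOf ψ l₀')⁻¹}) := by
        rw [Finset.coe_insert]
        exact G.allWalkGroup_insert_of_conn ψ hl₀'
      have hkey := mu_key2 hμ hμ1 (G.allWalkGroup ψ ↑F') (ψ e * (gainOf ψ l₀')⁻¹)
      rw [G.rk_insert_not_conn hc, G.rk_insert_conn ⟨l₀', hl₀'⟩, hgF, hgF']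
      linarith
    · have hnc : ¬ G.Conn ↑F (G.src e) (G.tgt e) := hc
      have hgF : G.allWalkGroup ψ ↑(insert e F) = G.allWalkGroup ψ ↑F := by
        rw [Finset.coe_insert]
        exact G.allWalkGroup_insert_of_not_conn ψ hnc
      have hgF' : G.allWalkGroup ψ ↑(insert e F') = G.allWalkGroup ψ ↑F' := by
        rw [Finset.coe_insert]
        exact G.allWalkGroup_insert_of_not_conn ψ hc'
      rw [G.rk_insert_not_conn hnc, G.rk_insert_not_conn hc', hgF, hgF']
      linarith

end GG
end Aux9

/-- Theorem 7.2: for an abelian group `Γ`, a `Γ`-gain graph `(G,ψ)` and a symmetric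
polymatroidal function `μ` with `μ({γ}) ≤ 1` for all `γ`, the function
`ℓ_μ(F) = |V(F)| − c(F) + μ(⟨⟨F⟩⟩)` is monotone and submodular. -/
theorem ellMu_monotone_submodular {V E Γ : Type*} [CommGroup Γ]
    [Fintype V] [Fintype E] [DecidableEq V] [DecidableEq E]
    (G : GG V E) (ψ : E → Γ) (μ : Set Γ → ℝ)
    (hμ : SymPolymatroidal μ) (hμ1 : ∀ γ : Γ, μ {γ} ≤ 1) :
    (∀ F₁ F₂ : Finset E, F₁ ⊆ F₂ → G.ellMu ψ μ F₁ ≤ G.ellMu ψ μ F₂) ∧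
    (∀ F₁ F₂ : Finset E,
      G.ellMu ψ μ (F₁ ∪ F₂) + G.ellMu ψ μ (F₁ ∩ F₂) ≤ G.ellMu ψ μ F₁ + G.ellMu ψ μ F₂) := by
  have hmono : ∀ (n : ℕ) (F₁ F₂ : Finset E), (F₂ \ F₁).card ≤ n → F₁ ⊆ F₂ →
      G.ellMu ψ μ F₁ ≤ G.ellMu ψ μ F₂ := by
    intro n
    induction n with
    | zero =>
        intro F₁ F₂ hcard hsub
        have h0 : F₂ \ F₁ = ∅ := Finset.card_eq_zero.1 (Nat.le_zero.1 hcard)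
        have : F₂ ⊆ F₁ := fun x hx => by
          by_contra hx1
          exact absurd (Finset.mem_sdiff.2 ⟨hx, hx1⟩) (by simp [h0])
        rw [Finset.Subset.antisymm hsub this]
    | succ n ih =>
        intro F₁ F₂ hcard hsub
        by_cases hss : F₂ ⊆ F₁
        · rw [Finset.Subset.antisymm hsub hss]
        · obtain ⟨e, he₂, he₁⟩ := Finset.not_subset.1 hss
          have hstep := G.ellMu_insert_mono ψ (F := F₁) (e := e) hμ
          have hsub2 : insert e F₁ ⊆ F₂ := Finset.insert_subset he₂ hsub
          have hcard2 : (F₂ \ insert e F₁).card ≤ n := by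
            have he' : e ∈ F₂ \ F₁ := Finset.mem_sdiff.2 ⟨he₂, he₁⟩
            have hsubset : F₂ \ insert e F₁ ⊆ (F₂ \ F₁).erase e := by
              intro x hx
              rw [Finset.mem_sdiff, Finset.mem_insert] at hx
              push_neg at hx
              exact Finset.mem_erase.2 ⟨hx.2.1, Finset.mem_sdiff.2 ⟨hx.1, hx.2.2⟩⟩
            have := Finset.card_le_card hsubset
            rw [Finset.card_erase_of_mem he'] at this
            omega
          exact le_trans hstep (ih (insert e F₁) F₂ hcard2 hsub2)
  have hsubmod : ∀ (n : ℕ) (F₁ F₂ : Finset E), (F₂ \ F₁).card ≤ n →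
      G.ellMu ψ μ (F₁ ∪ F₂) + G.ellMu ψ μ (F₁ ∩ F₂) ≤ G.ellMu ψ μ F₁ + G.ellMu ψ μ F₂ := by
    intro n
    induction n with
    | zero =>
        intro F₁ F₂ hcard
        have h0 : F₂ \ F₁ = ∅ := Finset.card_eq_zero.1 (Nat.le_zero.1 hcard)
        have hss : F₂ ⊆ F₁ := fun x hx => by
          by_contra hx1
          exact absurd (Finset.mem_sdiff.2 ⟨hx, hx1⟩) (by simp [h0])
        rw [Finset.union_eq_left.2 hss, Finset.inter_eq_right.2 hss]
    | succ n ih =>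
        intro F₁ F₂ hcard
        by_cases hss : F₂ ⊆ F₁
        · rw [Finset.union_eq_left.2 hss, Finset.inter_eq_right.2 hss]
        · obtain ⟨e, he₂, he₁⟩ := Finset.not_subset.1 hss
          set F₂' := F₂.erase e with hF₂'
          have heF₂ : insert e F₂' = F₂ := Finset.insert_erase he₂
          have hDR := G.ellMu_DR ψ (F := F₂') (F' := F₁ ∪ F₂') (e := e) hμ hμ1
            Finset.subset_union_right
          have hU : insert e (F₁ ∪ F₂') = F₁ ∪ F₂ := by
            rw [← Finset.union_insert, heF₂]
          have hI : F₁ ∩ F₂ = F₁ ∩ F₂' := by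
            ext x
            simp only [Finset.mem_inter, hF₂', Finset.mem_erase]
            constructor
            · rintro ⟨h1, h2⟩
              exact ⟨h1, fun h => he₁ (h ▸ h1), h2⟩
            · rintro ⟨h1, -, h2⟩
              exact ⟨h1, h2⟩
          have hcard2 : (F₂' \ F₁).card ≤ n := by
            have he' : e ∈ F₂ \ F₁ := Finset.mem_sdiff.2 ⟨he₂, he₁⟩
            have hsubset : F₂' \ F₁ ⊆ (F₂ \ F₁).erase e := by
              intro x hx
              rw [Finset.mem_sdiff, hF₂', Finset.mem_erase] at hx
              exact Finset.mem_erase.2 ⟨hx.1.1, Finset.mem_sdiff.2 ⟨hx.1.2, hx.2⟩⟩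
            have := Finset.card_le_card hsubset
            rw [Finset.card_erase_of_mem he'] at this
            omega
          have hih := ih F₁ F₂' hcard2
          rw [hU, heF₂] at hDR
          rw [hI]
          linarith
  exact ⟨fun F₁ F₂ h => hmono (F₂ \ F₁).card F₁ F₂ le_rfl h,
    fun F₁ F₂ => hsubmod (F₂ \ F₁).card F₁ F₂ le_rfl⟩
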